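/- For q not a root of unity, the subspaces V_{q,s} = span{v_s, F v_s} ⊆ V_q^{⊗k} are 2-dimensional irreducible U_q(gl(1|1))-submodules, and V_q^{⊗k} is their direct sum over all subsets s ⊆ {1,...,k−1}; equivalently V_q^{⊗k} ≅ ⊕_{ℓ=0}^{k−1} (k−1 choose ℓ) L_q[ℓ+1, k−1−ℓ]. -/

import Mathlib

noncomputable section

/-- `V_q^{⊗k}` for the two-dimensional `U_q(gl(1|1))`-module `V_q = ℂx ⊕ ℂy`,
realized as functions on words `w : Fin k → Bool` (`false` = `x`, `true` = `y`). -/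
abbrev TensorVq (k : ℕ) : Type := (Fin k → Bool) → ℂ

/-- The sign `(-1)^{#odd factors strictly before position i}` coming from `σ`. -/
def qSgn {k : ℕ} (w : Fin k → Bool) (i : Fin k) : ℂ :=
  (-1 : ℂ) ^ (Finset.univ.filter (fun j => j < i ∧ w j = true)).card

/-- The action of `E` on `V_q^{⊗k}` via the coproduct `Δ(E) = E ⊗ K⁻¹ + σ ⊗ E`:
`E` acts at position `i` with coefficient `(-1)^{#y before i} q^{-(k-1-i)}`. -/
def QEop (k : ℕ) (q : ℂ) : TensorVq k →ₗ[ℂ] TensorVq k :=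
  LinearMap.pi fun w =>
    ∑ i ∈ Finset.univ.filter (fun i => w i = false),
      (qSgn w i * q⁻¹ ^ (k - 1 - (i : ℕ))) •
        LinearMap.proj (R := ℂ) (φ := fun _ => ℂ) (Function.update w i true)

/-- The action of `F` on `V_q^{⊗k}` via the coproduct `Δ(F) = F ⊗ 1 + σK ⊗ F`:
`F` acts at position `i` with coefficient `(-1)^{#y before i} q^{i}`. -/
def QFop (k : ℕ) (q : ℂ) : TensorVq k →ₗ[ℂ] TensorVq k :=
  LinearMap.pi fun w =>
    ∑ i ∈ Finset.univ.filter (fun i => w i = true),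
      (qSgn w i * q ^ (i : ℕ)) •
        LinearMap.proj (R := ℂ) (φ := fun _ => ℂ) (Function.update w i false)

/-- The action of `q^{h₁}` on `V_q^{⊗k}`: a word is scaled by `q^{#x's}`. -/
def QH1op (k : ℕ) (q : ℂ) : TensorVq k →ₗ[ℂ] TensorVq k :=
  LinearMap.pi fun w =>
    (q ^ (Finset.univ.filter (fun i => w i = false)).card) •
      LinearMap.proj (R := ℂ) (φ := fun _ => ℂ) w

/-- The action of `q^{h₂}` on `V_q^{⊗k}`: a word is scaled by `q^{#y's}`. -/
def QH2op (k : ℕ) (q : ℂ) : TensorVq k →ₗ[ℂ] TensorVq k :=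
  LinearMap.pi fun w =>
    (q ^ (Finset.univ.filter (fun i => w i = true)).card) •
      LinearMap.proj (R := ℂ) (φ := fun _ => ℂ) w

/-- The action of `σ` on `V_q^{⊗k}`: a word is scaled by `(-1)^{#y's}`. -/
def QSop (k : ℕ) : TensorVq k →ₗ[ℂ] TensorVq k :=
  LinearMap.pi fun w =>
    ((-1 : ℂ) ^ (Finset.univ.filter (fun i => w i = true)).card) •
      LinearMap.proj (R := ℂ) (φ := fun _ => ℂ) w

/-- The standard basis vector of `V_q^{⊗k}` indexed by the word `w`. -/
def qbv {k : ℕ} (w : Fin k → Bool) : TensorVq k := fun w' => if w' = w then 1 else 0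

/-- The word of `y ⊗ u_s ∈ V_q^{⊗(n+1)}`, where `u_s = u₁⊗⋯⊗u_n` has `u_i = x`
iff `i ∈ s`. -/
def qwordOf {n : ℕ} (s : Finset (Fin n)) : Fin (n + 1) → Bool :=
  Fin.cons true (fun j => if j ∈ s then false else true)

/-- The highest weight vector `v_s = E · (y ⊗ u_s) ∈ V_q^{⊗(n+1)}`. -/
def qvStd {n : ℕ} (q : ℂ) (s : Finset (Fin n)) : TensorVq (n + 1) :=
  QEop (n + 1) q (qbv (qwordOf s))


section Aux

-- auxiliary

lemma qSgn_eq_prod {k : ℕ} (w : Fin k → Bool) (i : Fin k) :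
    qSgn w i = ∏ l, (if l < i ∧ w l = true then (-1 : ℂ) else 1) := by
  rw [qSgn, ← Finset.prod_const, Finset.prod_filter]

lemma qSgn_update {k : ℕ} (w : Fin k → Bool) (i : Fin k) (b : Bool) (j : Fin k) :
    qSgn (Function.update w i b) j =
      (if i < j ∧ w i = true then (-1 : ℂ) else 1) *
        ((if i < j ∧ b = true then (-1 : ℂ) else 1) * qSgn w j) := by
  rw [qSgn_eq_prod, qSgn_eq_prod]
  have h1 : (fun l => if l < j ∧ Function.update w i b l = true then (-1 : ℂ) else 1)
      = Function.update (fun l => if l < j ∧ w l = true then (-1 : ℂ) else 1) i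
          (if i < j ∧ b = true then (-1 : ℂ) else 1) := by
    funext l
    rcases eq_or_ne l i with rfl | hl
    · simp [Function.update_self]
    · simp [Function.update_of_ne hl]
  rw [show (∏ l, (if l < j ∧ Function.update w i b l = true then (-1 : ℂ) else 1))
      = ∏ l, Function.update (fun l => if l < j ∧ w l = true then (-1 : ℂ) else 1) i
          (if i < j ∧ b = true then (-1 : ℂ) else 1) l from by rw [h1]]
  rw [Finset.prod_update_of_mem (Finset.mem_univ i)]
  rw [Finset.prod_eq_mul_prod_sdiff_singleton_of_mem (Finset.mem_univ i)
    (fun l => if l < j ∧ w l = true then (-1 : ℂ) else 1)]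
  have hsq : (if i < j ∧ w i = true then (-1 : ℂ) else 1) *
      (if i < j ∧ w i = true then (-1 : ℂ) else 1) = 1 := by split_ifs <;> ring
  set A := (if i < j ∧ w i = true then (-1 : ℂ) else 1)
  set B := (if i < j ∧ b = true then (-1 : ℂ) else 1)
  set P := ∏ l ∈ Finset.univ \ {i}, (if l < j ∧ w l = true then (-1 : ℂ) else 1)
  calc B * P = (A * A) * (B * P) := by rw [hsq, one_mul]
    _ = A * (B * (A * P)) := by ring

lemma qSgn_update_flip {k : ℕ} (w : Fin k → Bool) {i j : Fin k} (b : Bool)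
    (h : w i = b) :
    qSgn (Function.update w i (!b)) j = (if i < j then (-1 : ℂ) else 1) * qSgn w j := by
  rw [qSgn_update]
  cases b <;> by_cases hlt : i < j <;> simp [h, hlt]

lemma qSgn_update_self {k : ℕ} (w : Fin k → Bool) (i : Fin k) (b : Bool) :
    qSgn (Function.update w i b) i = qSgn w i := by
  rw [qSgn_update]
  simp [lt_irrefl]

lemma qSgn_mul_self {k : ℕ} (w : Fin k → Bool) (i : Fin k) :
    qSgn w i * qSgn w i = 1 := by
  rw [qSgn, ← pow_add]
  exact Even.neg_one_pow ⟨_, rfl⟩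

lemma QEop_apply {k : ℕ} (q : ℂ) (f : TensorVq k) (w : Fin k → Bool) :
    QEop k q f w = ∑ i ∈ Finset.univ.filter (fun i => w i = false),
      qSgn w i * q⁻¹ ^ (k - 1 - (i : ℕ)) * f (Function.update w i true) := by
  simp [QEop, LinearMap.pi_apply, LinearMap.sum_apply, LinearMap.smul_apply,
    LinearMap.proj_apply, smul_eq_mul]

lemma QFop_apply {k : ℕ} (q : ℂ) (f : TensorVq k) (w : Fin k → Bool) :
    QFop k q f w = ∑ i ∈ Finset.univ.filter (fun i => w i = true),
      qSgn w i * q ^ (i : ℕ) * f (Function.update w i false) := by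
  simp [QFop, LinearMap.pi_apply, LinearMap.sum_apply, LinearMap.smul_apply,
    LinearMap.proj_apply, smul_eq_mul]

lemma filter_update_same {k : ℕ} (w : Fin k → Bool) (i : Fin k) {b c : Bool} (hc : c ≠ b) :
    Finset.univ.filter (fun l => Function.update w i c l = b)
      = (Finset.univ.filter (fun l => w l = b)).erase i := by
  ext l
  rcases eq_or_ne l i with rfl | hl
  · simp [Function.update_self, hc]
  · simp [Function.update_of_ne hl, hl]

lemma filter_update_insert {k : ℕ} (w : Fin k → Bool) (i : Fin k) (c : Bool) :
    Finset.univ.filter (fun l => Function.update w i c l = c)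
      = insert i (Finset.univ.filter (fun l => w l = c)) := by
  ext l
  rcases eq_or_ne l i with rfl | hl
  · simp [Function.update_self]
  · simp [Function.update_of_ne hl, hl]

lemma flip_sq {k : ℕ} (b : Bool) (c : Fin k → ℂ) (f : TensorVq k) (w : Fin k → Bool) :
    ∑ i ∈ Finset.univ.filter (fun i => w i = b), qSgn w i * c i *
      (∑ j ∈ Finset.univ.filter (fun j => (Function.update w i (!b)) j = b),
        qSgn (Function.update w i (!b)) j * c j *
          f (Function.update (Function.update w i (!b)) j (!b))) = 0 := by
  have hfil : ∀ i : Fin k,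
      Finset.univ.filter (fun j => (Function.update w i (!b)) j = b)
        = (Finset.univ.filter (fun j => w j = b)).filter (fun j => j ≠ i) := by
    intro i
    rw [filter_update_same w i (Bool.not_ne_self b), Finset.filter_ne']
  simp only [hfil]
  set S := Finset.univ.filter (fun i => w i = b) with hS
  have hinner : ∀ i ∈ S, qSgn w i * c i *
      (∑ j ∈ S.filter (fun j => j ≠ i), qSgn (Function.update w i (!b)) j * c j *
        f (Function.update (Function.update w i (!b)) j (!b)))
      = ∑ j ∈ S, if j ≠ i then qSgn w i * c i * (qSgn (Function.update w i (!b)) j * c j *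
        f (Function.update (Function.update w i (!b)) j (!b))) else 0 := by
    intro i _
    rw [Finset.sum_filter, Finset.mul_sum]
    exact Finset.sum_congr rfl (fun j _ => by rw [mul_ite, mul_zero])
  rw [Finset.sum_congr rfl hinner, ← Finset.sum_product']
  refine Finset.sum_involution (fun p _ => (p.2, p.1)) ?_ ?_ ?_ ?_
  · rintro ⟨i, j⟩ hp
    simp only [Finset.mem_product, hS, Finset.mem_filter] at hp
    obtain ⟨⟨-, hwi⟩, -, hwj⟩ := hp
    rcases eq_or_ne j i with rfl | hne
    · simp
    · have hij : i ≠ j := fun h => hne h.symm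
      rw [if_pos hne, if_pos hij, qSgn_update_flip w b hwi, qSgn_update_flip w b hwj,
        Function.update_comm hij]
      rcases hne.lt_or_gt with hlt | hlt
      · rw [if_neg (not_lt_of_gt hlt), if_pos hlt]; ring
      · rw [if_pos hlt, if_neg (not_lt_of_gt hlt)]; ring
  · rintro ⟨i, j⟩ hp hne heq
    apply hne
    rcases Prod.mk.injEq .. ▸ heq with ⟨h1, h2⟩
    simp [← h1]
  · rintro ⟨i, j⟩ hp
    simp only [Finset.mem_product] at hp ⊢
    exact ⟨hp.2, hp.1⟩
  · rintro ⟨i, j⟩ hp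
    rfl

lemma flip_anticomm {k : ℕ} (b : Bool) (c c' : Fin k → ℂ) (f : TensorVq k) (w : Fin k → Bool) :
    (∑ i ∈ Finset.univ.filter (fun i => w i = b), qSgn w i * c i *
      (∑ j ∈ Finset.univ.filter (fun j => (Function.update w i (!b)) j = !b),
        qSgn (Function.update w i (!b)) j * c' j *
          f (Function.update (Function.update w i (!b)) j b)))
    + (∑ j ∈ Finset.univ.filter (fun j => w j = !b), qSgn w j * c' j *
      (∑ i ∈ Finset.univ.filter (fun i => (Function.update w j b) i = b),
        qSgn (Function.update w j b) i * c i *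
          f (Function.update (Function.update w j b) i (!b))))
    = (∑ i : Fin k, c i * c' i) * f w := by
  set Sb := Finset.univ.filter (fun i => w i = b) with hSb
  set Snb := Finset.univ.filter (fun i => w i = !b) with hSnb
  have hfil1 : ∀ i : Fin k, Finset.univ.filter (fun j => (Function.update w i (!b)) j = !b)
      = insert i Snb := fun i => filter_update_insert w i (!b)
  have hfil2 : ∀ j : Fin k, Finset.univ.filter (fun i => (Function.update w j b) i = b)
      = insert j Sb := fun j => filter_update_insert w j b
  simp only [hfil1, hfil2]
  have h1 : (∑ i ∈ Sb, qSgn w i * c i *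
      (∑ j ∈ insert i Snb, qSgn (Function.update w i (!b)) j * c' j *
          f (Function.update (Function.update w i (!b)) j b)))
      = (∑ i ∈ Sb, c i * c' i * f w)
        + ∑ i ∈ Sb, ∑ j ∈ Snb, qSgn w i * c i * (qSgn (Function.update w i (!b)) j * c' j *
            f (Function.update (Function.update w i (!b)) j b)) := by
    rw [← Finset.sum_add_distrib]
    refine Finset.sum_congr rfl (fun i hi => ?_)
    have hwi : w i = b := (Finset.mem_filter.1 hi).2
    have hni : i ∉ Snb := by
      simp only [hSnb, Finset.mem_filter, Finset.mem_univ, true_and, hwi]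
      exact fun h => Bool.not_ne_self b h.symm
    have hup : Function.update (Function.update w i (!b)) i b = w := by
      rw [Function.update_idem, ← hwi, Function.update_eq_self]
    rw [Finset.sum_insert hni, hup, qSgn_update_self, mul_add, Finset.mul_sum]
    congr 1
    have := qSgn_mul_self w i
    calc qSgn w i * c i * (qSgn w i * c' i * f w)
        = (qSgn w i * qSgn w i) * (c i * c' i * f w) := by ring
      _ = c i * c' i * f w := by rw [this, one_mul]
  have h2 : (∑ j ∈ Snb, qSgn w j * c' j *
      (∑ i ∈ insert j Sb, qSgn (Function.update w j b) i * c i *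
          f (Function.update (Function.update w j b) i (!b))))
      = (∑ j ∈ Snb, c j * c' j * f w)
        + ∑ j ∈ Snb, ∑ i ∈ Sb, qSgn w j * c' j * (qSgn (Function.update w j b) i * c i *
            f (Function.update (Function.update w j b) i (!b))) := by
    rw [← Finset.sum_add_distrib]
    refine Finset.sum_congr rfl (fun j hj => ?_)
    have hwj : w j = !b := (Finset.mem_filter.1 hj).2
    have hnj : j ∉ Sb := by
      simp only [hSb, Finset.mem_filter, Finset.mem_univ, true_and, hwj]
      exact Bool.not_ne_self b
    have hup : Function.update (Function.update w j b) j (!b) = w := by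
      rw [Function.update_idem, ← hwj, Function.update_eq_self]
    rw [Finset.sum_insert hnj, hup, qSgn_update_self, mul_add, Finset.mul_sum]
    congr 1
    have := qSgn_mul_self w j
    calc qSgn w j * c' j * (qSgn w j * c j * f w)
        = (qSgn w j * qSgn w j) * (c j * c' j * f w) := by ring
      _ = c j * c' j * f w := by rw [this, one_mul]
  have h3 : (∑ i ∈ Sb, ∑ j ∈ Snb, qSgn w i * c i * (qSgn (Function.update w i (!b)) j * c' j *
            f (Function.update (Function.update w i (!b)) j b)))
      + (∑ j ∈ Snb, ∑ i ∈ Sb, qSgn w j * c' j * (qSgn (Function.update w j b) i * c i *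
            f (Function.update (Function.update w j b) i (!b)))) = 0 := by
    rw [Finset.sum_comm (s := Snb) (t := Sb), ← Finset.sum_add_distrib]
    refine Finset.sum_eq_zero (fun i hi => ?_)
    rw [← Finset.sum_add_distrib]
    refine Finset.sum_eq_zero (fun j hj => ?_)
    have hwi : w i = b := (Finset.mem_filter.1 hi).2
    have hwj : w j = !b := (Finset.mem_filter.1 hj).2
    have hij : i ≠ j := fun h => Bool.not_ne_self b (hwj.symm.trans (h ▸ hwi))
    have hb : Function.update w j b = Function.update w j (!(!b)) := by
      rw [Bool.not_not]
    rw [Function.update_comm hij, qSgn_update_flip w b hwi, hb,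
      qSgn_update_flip w (!b) hwj]
    rcases hij.lt_or_gt with hlt | hlt
    · rw [if_pos hlt, if_neg (not_lt_of_gt hlt)]; ring
    · rw [if_neg (not_lt_of_gt hlt), if_pos hlt]; ring
  have h4 : (∑ i ∈ Sb, c i * c' i * f w) + (∑ j ∈ Snb, c j * c' j * f w)
      = (∑ i : Fin k, c i * c' i) * f w := by
    have hc : Snb = Finset.univ.filter (fun i => ¬ (w i = b)) := by
      ext l
      cases hl : w l <;> cases b <;> simp [hSnb, hl]
    rw [hc, hSb, Finset.sum_filter_add_sum_filter_not Finset.univ (fun i => w i = b),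
      Finset.sum_mul]
  linear_combination h1 + h2 + h3 + h4

lemma QEop_QEop (k : ℕ) (q : ℂ) (f : TensorVq k) : QEop k q (QEop k q f) = 0 := by
  funext w
  show QEop k q (QEop k q f) w = 0
  rw [QEop_apply]
  simp only [QEop_apply]
  have h := flip_sq (k := k) false (fun i : Fin k => q⁻¹ ^ (k - 1 - (i : ℕ))) f w
  simp only [Bool.not_false] at h
  exact h

lemma QFop_QFop (k : ℕ) (q : ℂ) (f : TensorVq k) : QFop k q (QFop k q f) = 0 := by
  funext w
  show QFop k q (QFop k q f) w = 0
  rw [QFop_apply]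
  simp only [QFop_apply]
  have h := flip_sq (k := k) true (fun i : Fin k => q ^ (i : ℕ)) f w
  simp only [Bool.not_true] at h
  exact h

lemma QE_QF_anticomm (k : ℕ) (q : ℂ) (f : TensorVq k) :
    QEop k q (QFop k q f) + QFop k q (QEop k q f)
      = (∑ i : Fin k, q⁻¹ ^ (k - 1 - (i : ℕ)) * q ^ (i : ℕ)) • f := by
  funext w
  simp only [Pi.add_apply, Pi.smul_apply, smul_eq_mul]
  rw [QEop_apply, QFop_apply]
  simp only [QEop_apply, QFop_apply]
  have h := flip_anticomm (k := k) false (fun i : Fin k => q⁻¹ ^ (k - 1 - (i : ℕ)))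
    (fun i : Fin k => q ^ (i : ℕ)) f w
  simp only [Bool.not_false] at h
  exact h

lemma qc_ne_zero (n : ℕ) (q : ℂ) (hq : q ≠ 0) (hroot : ∀ m : ℕ, 0 < m → q ^ m ≠ 1) :
    (∑ i : Fin (n + 1), q⁻¹ ^ (n + 1 - 1 - (i : ℕ)) * q ^ (i : ℕ)) ≠ 0 := by
  have key : q ^ n * (∑ i : Fin (n + 1), q⁻¹ ^ (n + 1 - 1 - (i : ℕ)) * q ^ (i : ℕ))
      = ∑ i ∈ Finset.range (n + 1), (q ^ 2) ^ i := by
    rw [Finset.mul_sum, Fin.sum_univ_eq_sum_range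
      (fun i => q ^ n * (q⁻¹ ^ (n + 1 - 1 - i) * q ^ i))]
    refine Finset.sum_congr rfl (fun i hi => ?_)
    have hin : i ≤ n := Nat.lt_succ_iff.1 (Finset.mem_range.1 hi)
    have h1 : q ^ n = q ^ (n - i) * q ^ i := by
      rw [← pow_add, Nat.sub_add_cancel hin]
    have h2 : q ^ (n - i) * q⁻¹ ^ (n - i) = 1 := by
      rw [← mul_pow, mul_inv_cancel₀ hq, one_pow]
    calc q ^ n * (q⁻¹ ^ (n + 1 - 1 - i) * q ^ i)
        = (q ^ (n - i) * q⁻¹ ^ (n - i)) * (q ^ i * q ^ i) := by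
          rw [h1]; simp only [Nat.add_sub_cancel]; ring
      _ = (q ^ i) ^ 2 := by rw [h2, one_mul, sq]
      _ = (q ^ 2) ^ i := by rw [← pow_mul, ← pow_mul, Nat.mul_comm]
  have hgeom : (q ^ 2 - 1) * (∑ i ∈ Finset.range (n + 1), (q ^ 2) ^ i)
      = (q ^ 2) ^ (n + 1) - 1 := mul_geom_sum (q ^ 2) (n + 1)
  have hne1 : q ^ 2 - 1 ≠ 0 := sub_ne_zero.2 (hroot 2 (by norm_num))
  have hne2 : (q ^ 2) ^ (n + 1) - 1 ≠ 0 := by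
    rw [← pow_mul]
    exact sub_ne_zero.2 (hroot (2 * (n + 1)) (by positivity))
  have hsum : (∑ i ∈ Finset.range (n + 1), (q ^ 2) ^ i) ≠ 0 := by
    intro h
    rw [h, mul_zero] at hgeom
    exact hne2 hgeom.symm
  intro h
  rw [h, mul_zero] at key
  exact hsum key.symm

def qtest {n : ℕ} (s : Finset (Fin n)) : Fin (n + 1) → Bool :=
  Fin.cons false (fun j => if j ∈ s then false else true)

lemma update_qtest {n : ℕ} (s : Finset (Fin n)) :
    Function.update (qtest s) 0 true = qwordOf s := by
  funext j
  refine Fin.cases ?_ (fun j => ?_) j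
  · rw [Function.update_self]
    simp [qwordOf]
  · rw [Function.update_of_ne (Fin.succ_ne_zero j)]
    simp [qtest, qwordOf]

lemma qwordOf_inj {n : ℕ} {s t : Finset (Fin n)} (h : qwordOf s = qwordOf t) : s = t := by
  ext j
  have hj := congrFun h j.succ
  simp only [qwordOf, Fin.cons_succ] at hj
  by_cases hs : j ∈ s <;> by_cases ht : j ∈ t <;> simp [hs, ht] at hj ⊢

lemma qvStd_qtest {n : ℕ} (q : ℂ) (s t : Finset (Fin n)) :
    qvStd q t (qtest s) = if t = s then q⁻¹ ^ n else 0 := by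
  rw [qvStd, QEop_apply]
  have hzero : ∀ i : Fin (n + 1), i ≠ 0 →
      qbv (qwordOf t) (Function.update (qtest s) i true) = 0 := by
    intro i hi
    rw [qbv, if_neg]
    intro h
    have h0 := congrFun h 0
    rw [Function.update_of_ne (Ne.symm hi)] at h0
    simp [qtest, qwordOf] at h0
  by_cases hts : t = s
  · subst hts
    rw [Finset.sum_eq_single_of_mem 0
      (by simp [qtest])
      (fun i _ hi => by rw [hzero i hi, mul_zero]), if_pos rfl]
    rw [update_qtest, qbv, if_pos rfl, mul_one]
    have hsgn : qSgn (qtest t) 0 = 1 := by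
      rw [qSgn]
      norm_num [Finset.filter_eq_empty_iff]
    rw [hsgn, one_mul]
    norm_num
  · rw [if_neg hts]
    refine Finset.sum_eq_zero (fun i _ => ?_)
    rcases eq_or_ne i 0 with rfl | hi
    · rw [update_qtest, qbv, if_neg (fun h => hts (qwordOf_inj h).symm), mul_zero]
    · rw [hzero i hi, mul_zero]

lemma indep_qvStd {n : ℕ} (q : ℂ) (hq : q ≠ 0) (g : Finset (Fin n) → ℂ)
    (h : ∑ s, g s • qvStd q s = 0) : ∀ s, g s = 0 := by
  intro s
  have h2 : ∑ t, (g t • qvStd q t) (qtest s) = 0 := by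
    rw [← Finset.sum_apply]
    rw [h]
    rfl
  simp only [Pi.smul_apply, smul_eq_mul, qvStd_qtest, mul_ite, mul_zero] at h2
  rw [Finset.sum_ite_eq' Finset.univ s (fun t => g t * q⁻¹ ^ n),
    if_pos (Finset.mem_univ s)] at h2
  rcases mul_eq_zero.1 h2 with h | h
  · exact h
  · exact absurd h (pow_ne_zero n (inv_ne_zero hq))

lemma indep_family {n : ℕ} (q : ℂ) (hq : q ≠ 0) (hroot : ∀ m : ℕ, 0 < m → q ^ m ≠ 1) :
    LinearIndependent ℂ (fun p : Finset (Fin n) × Bool =>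
      if p.2 then QFop (n + 1) q (qvStd q p.1) else qvStd q p.1) := by
  rw [Fintype.linearIndependent_iff]
  intro g hg
  rw [Fintype.sum_prod_type] at hg
  simp only [Fintype.sum_bool, if_true, Bool.false_eq_true, if_false] at hg
  set qc := ∑ i : Fin (n + 1), q⁻¹ ^ (n + 1 - 1 - (i : ℕ)) * q ^ (i : ℕ) with hqc
  have hqcne := qc_ne_zero n q hq hroot
  have hEv : ∀ s : Finset (Fin n), QEop (n + 1) q (qvStd q s) = 0 :=
    fun s => QEop_QEop _ q _
  have hEFv : ∀ s : Finset (Fin n),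
      QEop (n + 1) q (QFop (n + 1) q (qvStd q s)) = qc • qvStd q s := by
    intro s
    have h := QE_QF_anticomm (n + 1) q (qvStd q s)
    rw [hEv s, map_zero, add_zero] at h
    exact h
  have htrue : ∀ s, g (s, true) = 0 := by
    have happ := congrArg (QEop (n + 1) q) hg
    rw [map_sum, map_zero] at happ
    simp only [map_add, map_smul, hEv, hEFv, smul_zero, add_zero] at happ
    have h2 : ∑ s, (g (s, true) * qc) • qvStd q s = 0 := by
      rw [← happ]
      exact Finset.sum_congr rfl (fun s _ => by rw [smul_smul])
    intro s
    rcases mul_eq_zero.1 (indep_qvStd q hq _ h2 s) with h | h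
    · exact h
    · exact absurd h hqcne
  have hfalse : ∀ s, g (s, false) = 0 := by
    simp only [htrue, zero_smul, zero_add] at hg
    exact indep_qvStd q hq _ hg
  rintro ⟨s, b⟩
  cases b
  · exact hfalse s
  · exact htrue s

end Aux

end

/-- The subspace `V_{q,s} = span{v_s, F·v_s} ⊆ V_q^{⊗(n+1)}`. -/
noncomputable def QVsub {n : ℕ} (q : ℂ) (s : Finset (Fin n)) :
    Submodule ℂ (TensorVq (n + 1)) :=
  Submodule.span ℂ {qvStd q s, QFop (n + 1) q (qvStd q s)}

/-- For `q` not a root of unity, the subspaces `V_{q,s} = span{v_s, F v_s}` are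
2-dimensional irreducible `U_q(gl(1|1))`-submodules, and `V_q^{⊗k}` (`k = n+1`)
is their internal direct sum over subsets `s ⊆ {1,…,k-1}`; the number of summands
with `|s| = ℓ` (i.e. isomorphic to `L_q[ℓ+1,k-1-ℓ]`) is `(k-1 choose ℓ)`. -/
theorem q_tensor_decomposition (n : ℕ) (q : ℂ) (hq : q ≠ 0)
    (hroot : ∀ m : ℕ, 0 < m → q ^ m ≠ 1) :
    DirectSum.IsInternal (fun s : Finset (Fin n) => QVsub q s) ∧
    (∀ s : Finset (Fin n), Module.finrank ℂ (QVsub q s) = 2) ∧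
    (∀ s : Finset (Fin n), ∀ N : Submodule ℂ (TensorVq (n + 1)), N ≤ QVsub q s →
      (∀ x ∈ N, QEop (n + 1) q x ∈ N) → (∀ x ∈ N, QFop (n + 1) q x ∈ N) →
      (∀ x ∈ N, QH1op (n + 1) q x ∈ N) → (∀ x ∈ N, QH2op (n + 1) q x ∈ N) →
      (∀ x ∈ N, QSop (n + 1) x ∈ N) →
      N ≠ ⊥ → N = QVsub q s) ∧
    (∀ ℓ : ℕ, ((Finset.univ : Finset (Finset (Fin n))).filter
      (fun s => s.card = ℓ)).card = n.choose ℓ) := by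
  classical
  set B : Finset (Fin n) × Bool → TensorVq (n + 1) :=
    fun p => if p.2 then QFop (n + 1) q (qvStd q p.1) else qvStd q p.1 with hB
  have hli : LinearIndependent ℂ B := indep_family q hq hroot
  have hcard : Fintype.card (Finset (Fin n) × Bool)
      = Module.finrank ℂ (TensorVq (n + 1)) := by
    rw [Module.finrank_fintype_fun_eq_card]
    simp [Fintype.card_prod, Fintype.card_finset, Fintype.card_fun, pow_succ]
  have hbasis : Submodule.span ℂ (Set.range B) = ⊤ := by
    have h := (basisOfLinearIndependentOfCardEqFinrank hli hcard).span_eq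
    rwa [coe_basisOfLinearIndependentOfCardEqFinrank] at h
  have hQV : ∀ s : Finset (Fin n),
      QVsub q s = Submodule.span ℂ (B '' {(s, false), (s, true)}) := by
    intro s
    rw [QVsub, Set.image_pair]
    simp only [hB]
    norm_num
  have hsup : (⨆ s : Finset (Fin n), QVsub q s) = ⊤ := by
    rw [← top_le_iff, ← hbasis, Submodule.span_le]
    rintro x ⟨⟨s, b⟩, rfl⟩
    refine SetLike.mem_coe.2 ((le_iSup (fun s => QVsub q s) s) ?_)
    rw [hQV s]
    refine Submodule.subset_span ⟨(s, b), ?_, rfl⟩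
    cases b <;> simp
  have hind : iSupIndep (fun s : Finset (Fin n) => QVsub q s) := by
    rw [iSupIndep_def]
    intro s
    rw [hQV s]
    have hle : (⨆ (t : Finset (Fin n)) (_ : t ≠ s), QVsub q t)
        ≤ Submodule.span ℂ (B '' {p : Finset (Fin n) × Bool | p.1 ≠ s}) := by
      refine iSup₂_le (fun t ht => ?_)
      rw [hQV t]
      refine Submodule.span_mono (Set.image_mono (f := B) ?_)
      rintro p (rfl | rfl) <;> exact ht
    have hdisj : Disjoint ({(s, false), (s, true)} : Set (Finset (Fin n) × Bool))
        {p : Finset (Fin n) × Bool | p.1 ≠ s} := by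
      rw [Set.disjoint_left]
      rintro p (rfl | rfl) hp <;> exact hp rfl
    exact Disjoint.mono_right hle (hli.disjoint_span_image hdisj)
  have hinternal : DirectSum.IsInternal (fun s : Finset (Fin n) => QVsub q s) :=
    DirectSum.isInternal_submodule_of_iSupIndep_of_iSup_eq_top hind hsup
  have hrank : ∀ s : Finset (Fin n), Module.finrank ℂ (QVsub q s) = 2 := by
    intro s
    have hinj : Function.Injective (fun b : Bool => ((s, b) : Finset (Fin n) × Bool)) :=
      fun a b h => congrArg Prod.snd h
    have hli2 : LinearIndependent ℂ (fun b : Bool => B (s, b)) := hli.comp _ hinj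
    have hrange : Set.range (fun b : Bool => B (s, b)) = B '' {(s, false), (s, true)} := by
      ext x
      constructor
      · rintro ⟨b, rfl⟩
        exact ⟨(s, b), by cases b <;> simp, rfl⟩
      · rintro ⟨p, hp, rfl⟩
        rcases hp with rfl | rfl
        exacts [⟨false, rfl⟩, ⟨true, rfl⟩]
    rw [hQV s, ← hrange, finrank_span_eq_card hli2]
    simp
  refine ⟨hinternal, hrank, ?_, ?_⟩
  · intro s N hNle hE hF _ _ _ hNbot
    obtain ⟨x, hxN, hx0⟩ := Submodule.exists_mem_ne_zero_of_ne_bot hNbot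
    obtain ⟨a, b, hab⟩ := Submodule.mem_span_pair.1 (hNle hxN)
    set qc := ∑ i : Fin (n + 1), q⁻¹ ^ (n + 1 - 1 - (i : ℕ)) * q ^ (i : ℕ) with hqc
    have hqcne := qc_ne_zero n q hq hroot
    have hEvs : QEop (n + 1) q (qvStd q s) = 0 := QEop_QEop _ q _
    have hEF : QEop (n + 1) q (QFop (n + 1) q (qvStd q s)) = qc • qvStd q s := by
      have h := QE_QF_anticomm (n + 1) q (qvStd q s)
      rw [hEvs, map_zero, add_zero] at h
      exact h
    have key : qvStd q s ∈ N ∧ QFop (n + 1) q (qvStd q s) ∈ N := by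
      by_cases hb : b = 0
      · subst hb
        rw [zero_smul, add_zero] at hab
        have ha : a ≠ 0 := fun h => hx0 (by rw [← hab, h, zero_smul])
        have hv : qvStd q s ∈ N := by
          have h2 := N.smul_mem a⁻¹ hxN
          rw [← hab, smul_smul, inv_mul_cancel₀ ha, one_smul] at h2
          exact h2
        exact ⟨hv, hF _ hv⟩
      · have hEx : QEop (n + 1) q x ∈ N := hE x hxN
        have hform : QEop (n + 1) q x = (b * qc) • qvStd q s := by
          rw [← hab, map_add, map_smul, map_smul, hEvs, hEF, smul_zero, zero_add,
            smul_smul]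
        have hv : qvStd q s ∈ N := by
          have h2 := N.smul_mem (b * qc)⁻¹ hEx
          rw [hform, smul_smul, inv_mul_cancel₀ (mul_ne_zero hb hqcne), one_smul] at h2
          exact h2
        exact ⟨hv, hF _ hv⟩
    refine le_antisymm hNle ?_
    rw [QVsub, Submodule.span_le]
    rintro y (rfl | rfl)
    exacts [key.1, key.2]
  · intro ℓ
    rw [← Finset.powerset_univ, ← Finset.powersetCard_eq_filter,
      Finset.card_powersetCard, Finset.card_univ, Fintype.card_fin]
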